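/- If u ∈ H¹(0,1) satisfies ∫₀¹ u(x) dx = 0, then sup_{x∈(0,1)} |u(x)| ≤ ‖u'‖_{L²(0,1)}. -/
import Mathlib


open MeasureTheory

/-- If `u ∈ H¹(0,1)` has zero mean on `(0,1)`, then `sup_{x∈(0,1)} |u(x)| ≤ ‖u'‖_{L²(0,1)}`. -/
theorem sup_le_L2_deriv_of_zero_mean (u u' : ℝ → ℝ)
    (hu : ∀ x ∈ Set.Icc (0 : ℝ) 1, HasDerivWithinAt u (u' x) (Set.Icc 0 1) x)
    (hu'int : IntervalIntegrable u' volume 0 1)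
    (hu'L2 : IntervalIntegrable (fun x => (u' x) ^ 2) volume 0 1)
    (hmean : (∫ x in (0 : ℝ)..1, u x) = 0) :
    ∀ x ∈ Set.Ioo (0 : ℝ) 1, |u x| ≤ Real.sqrt (∫ y in (0 : ℝ)..1, (u' y) ^ 2) := by
  intro x hx
  -- continuity of u on [0,1]
  have hucont : ContinuousOn u (Set.Icc 0 1) := fun y hy => (hu y hy).continuousWithinAt
  have huint : IntervalIntegrable u volume 0 1 :=
    (hucont.mono (by (rw [Set.uIcc_of_le]; norm_num))).intervalIntegrable
  -- there is c ∈ [0,1] with u c = 0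
  obtain ⟨c, hc, huc⟩ : ∃ c ∈ Set.Icc (0:ℝ) 1, u c = 0 := by
    by_cases hpos : ∃ a ∈ Set.Ioo (0:ℝ) 1, u a ≤ 0
    · by_cases hneg : ∃ b ∈ Set.Ioo (0:ℝ) 1, 0 ≤ u b
      · obtain ⟨a, ha, hua⟩ := hpos
        obtain ⟨b, hb, hub⟩ := hneg
        have hsub : Set.uIcc a b ⊆ Set.Icc 0 1 :=
          Set.uIcc_subset_Icc (Set.mem_Icc_of_Ioo ha) (Set.mem_Icc_of_Ioo hb)
        have := intermediate_value_uIcc (hucont.mono hsub)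
        have h0 : (0:ℝ) ∈ Set.uIcc (u a) (u b) := Set.mem_uIcc.2 (Or.inl ⟨hua, hub⟩)
        obtain ⟨c, hc, huc⟩ := this h0
        exact ⟨c, hsub hc, huc⟩
      · push_neg at hneg
        have : (∫ y in (0:ℝ)..1, u y) < 0 := by
          have := intervalIntegral.intervalIntegral_pos_of_pos_on (f := fun y => -u y)
            huint.neg (fun y hy => by simpa using (hneg y hy)) one_pos
          simpa [intervalIntegral.integral_neg] using this
        linarith [hmean]
    · push_neg at hpos
      have : (0:ℝ) < ∫ y in (0:ℝ)..1, u y :=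
        intervalIntegral.intervalIntegral_pos_of_pos_on huint (fun y hy => hpos y hy) one_pos
      linarith [hmean]
  -- FTC on the interval between c and x
  have hxI : x ∈ Set.Icc (0:ℝ) 1 := Set.mem_Icc_of_Ioo hx
  have hsub : Set.uIcc c x ⊆ Set.Icc 0 1 := Set.uIcc_subset_Icc hc hxI
  have hftc : (∫ y in c..x, u' y) = u x - u c := by
    apply intervalIntegral.integral_eq_sub_of_hasDeriv_right (hucont.mono hsub)
    · intro y hy
      have hy1 : y ∈ Set.Ioo (0:ℝ) 1 := by
        rcases hy with ⟨h1, h2⟩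
        constructor
        · exact lt_of_le_of_lt (le_min hc.1 hxI.1) h1
        · exact lt_of_lt_of_le h2 (max_le hc.2 hxI.2)
      have : HasDerivAt u (u' y) y :=
        (hu y (Set.mem_Icc_of_Ioo hy1)).hasDerivAt (Icc_mem_nhds hy1.1 hy1.2)
      exact this.hasDerivWithinAt
    · exact hu'int.mono_set (by simpa using hsub)
  -- Cauchy-Schwarz with explicit constant
  set S := ∫ y in (0:ℝ)..1, (u' y)^2 with hS
  set t := ∫ y in (0:ℝ)..1, |u' y| with ht
  have habsint : IntervalIntegrable (fun y => |u' y|) volume 0 1 := hu'int.abs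
  have ht0 : 0 ≤ t := intervalIntegral.integral_nonneg (by norm_num) (fun y _ => abs_nonneg _)
  have hkey : t ^ 2 ≤ S := by
    have h0 : (0:ℝ) ≤ ∫ y in (0:ℝ)..1, (|u' y| - t)^2 :=
      intervalIntegral.integral_nonneg (by norm_num) (fun y _ => sq_nonneg _)
    have hexp : (∫ y in (0:ℝ)..1, (|u' y| - t)^2) = S - t^2 := by
      have h1 : ∀ y, (|u' y| - t)^2 = (u' y)^2 - 2*t*|u' y| + t^2 := fun y => by
        rw [sub_sq, sq_abs]; ring
      simp_rw [h1]
      rw [intervalIntegral.integral_add ((hu'L2.sub ((habsint.const_mul (2*t))))) intervalIntegrable_const,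
        intervalIntegral.integral_sub hu'L2 (habsint.const_mul (2*t)),
        intervalIntegral.integral_const_mul, intervalIntegral.integral_const]
      simp [hS, ht]
      ring
    linarith
  -- combine
  have hux : |u x| ≤ t := by
    have h1 : |u x| = |∫ y in c..x, u' y| := by rw [hftc, huc, sub_zero]
    rw [h1]
    rcases le_total c x with h | h
    · calc |∫ y in c..x, u' y| ≤ ∫ y in c..x, |u' y| :=
            intervalIntegral.abs_integral_le_integral_abs h
        _ ≤ t := intervalIntegral.integral_mono_interval hc.1 h hxI.2
            (Filter.Eventually.of_forall fun y => abs_nonneg _) habsint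
    · rw [intervalIntegral.integral_symm, abs_neg]
      calc |∫ y in x..c, u' y| ≤ ∫ y in x..c, |u' y| :=
            intervalIntegral.abs_integral_le_integral_abs h
        _ ≤ t := intervalIntegral.integral_mono_interval hxI.1 h hc.2
            (Filter.Eventually.of_forall fun y => abs_nonneg _) habsint
  calc |u x| ≤ t := hux
    _ = Real.sqrt (t^2) := by rw [Real.sqrt_sq ht0]
    _ ≤ Real.sqrt S := Real.sqrt_le_sqrt hkey
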